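/- With the ratio setup, fix x = (x_1, …, x_n) ∈ (ℂ^d)^n such that G_i(x) is positive definite, and set y_i = Y_i(x) = G_i(x)^{-1} A_i x_i. Then the real-valued function M_i : (ℂ^d)^n → ℝ is differentiable over ℝ at x, and its ℝ-Fréchet derivative in an arbitrary direction h = (h_1, …, h_n) ∈ (ℂ^d)^n is given by D M_i(x)[h] = 2·Re{(A_i^H y_i − B_{ii}^H y_i y_i^H B_{ii} x_i)^H h_i} − 2·∑_{j ≠ i} Re{(B_{ij}^H y_i y_i^H B_{ij} x_j)^H h_j}. (Equivalently, in conjugate-coordinate notation, ∂M_i/∂x_i^c = 2 A_i^H y_i − 2 B_{ii}^H y_i y_i^H B_{ii} x_i and ∂M_i/∂x_j^c = −2 B_{ij}^H y_i y_i^H B_{ij} x_j for j ≠ i.) -/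

import Mathlib

open Matrix ComplexOrder

attribute [local instance] Matrix.linftyOpNormedRing Matrix.linftyOpNormedAlgebra

/-- `Gᵢ(x) = ∑ⱼ Bᵢⱼ xⱼ xⱼᴴ Bᵢⱼᴴ`. -/
noncomputable def Gmat {n d ℓ : ℕ}
    (B : Fin n → Fin n → Matrix (Fin ℓ) (Fin d) ℂ)
    (x : Fin n → Fin d → ℂ) (i : Fin n) : Matrix (Fin ℓ) (Fin ℓ) ℂ :=
  ∑ j, B i j * vecMulVec (x j) (star (x j)) * (B i j)ᴴ

/-- The ratio `Mᵢ(x) = (Aᵢ xᵢ)ᴴ Gᵢ(x)⁻¹ (Aᵢ xᵢ)` (a real number). -/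
noncomputable def Mratio {n d ℓ : ℕ}
    (A : Fin n → Matrix (Fin ℓ) (Fin d) ℂ)
    (B : Fin n → Fin n → Matrix (Fin ℓ) (Fin d) ℂ)
    (x : Fin n → Fin d → ℂ) (i : Fin n) : ℝ :=
  (star (A i *ᵥ x i) ⬝ᵥ (Gmat B x i)⁻¹ *ᵥ (A i *ᵥ x i)).re

namespace MratioAux

open ContinuousLinearMap

/-- Upgrade a real bilinear map between finite-dimensional real normed spaces to a
continuous bilinear map. -/
noncomputable def clm2 {E F G : Type*} [NormedAddCommGroup E] [NormedSpace ℝ E]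
    [FiniteDimensional ℝ E] [NormedAddCommGroup F] [NormedSpace ℝ F] [FiniteDimensional ℝ F]
    [NormedAddCommGroup G] [NormedSpace ℝ G]
    (b : E →ₗ[ℝ] F →ₗ[ℝ] G) : E →L[ℝ] F →L[ℝ] G :=
  LinearMap.toContinuousLinearMap
    ((LinearMap.toContinuousLinearMap :
        (F →ₗ[ℝ] G) ≃ₗ[ℝ] (F →L[ℝ] G)).toLinearMap.comp b)

@[simp] lemma clm2_apply {E F G : Type*} [NormedAddCommGroup E] [NormedSpace ℝ E]
    [FiniteDimensional ℝ E] [NormedAddCommGroup F] [NormedSpace ℝ F] [FiniteDimensional ℝ F]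
    [NormedAddCommGroup G] [NormedSpace ℝ G]
    (b : E →ₗ[ℝ] F →ₗ[ℝ] G) (u : E) (w : F) : clm2 b u w = b u w := rfl

variable {n d ℓ : ℕ}

noncomputable def dotCLM (ℓ : ℕ) : (Fin ℓ → ℂ) →L[ℝ] (Fin ℓ → ℂ) →L[ℝ] ℂ :=
  clm2 <| LinearMap.mk₂ ℝ (fun u w => u ⬝ᵥ w)
    (fun _ _ _ => add_dotProduct _ _ _)
    (fun _ _ _ => smul_dotProduct _ _ _)
    (fun _ _ _ => dotProduct_add _ _ _)
    (fun _ _ _ => dotProduct_smul _ _ _)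

@[simp] lemma dotCLM_apply (u w : Fin ℓ → ℂ) : dotCLM ℓ u w = u ⬝ᵥ w := rfl

noncomputable def mvCLM (ℓ : ℕ) :
    Matrix (Fin ℓ) (Fin ℓ) ℂ →L[ℝ] (Fin ℓ → ℂ) →L[ℝ] (Fin ℓ → ℂ) :=
  clm2 <| LinearMap.mk₂ ℝ (fun M u => M *ᵥ u)
    (fun _ _ _ => add_mulVec _ _ _)
    (fun _ _ _ => smul_mulVec _ _ _)
    (fun _ _ _ => mulVec_add _ _ _)
    (fun _ _ _ => mulVec_smul _ _ _)

@[simp] lemma mvCLM_apply (M : Matrix (Fin ℓ) (Fin ℓ) ℂ) (u : Fin ℓ → ℂ) :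
    mvCLM ℓ M u = M *ᵥ u := rfl

noncomputable def outerCLM (ℓ : ℕ) :
    (Fin ℓ → ℂ) →L[ℝ] (Fin ℓ → ℂ) →L[ℝ] Matrix (Fin ℓ) (Fin ℓ) ℂ :=
  clm2 <| LinearMap.mk₂ ℝ (fun u w => vecMulVec u (star w))
    (fun u u' w => by ext a b; simp [vecMulVec_apply, add_mul])
    (fun c u w => by ext a b; simp [vecMulVec_apply]; ring)
    (fun u w w' => by ext a b; simp [vecMulVec_apply, mul_add])
    (fun c u w => by ext a b; simp [vecMulVec_apply, star_smul]; ring)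

@[simp] lemma outerCLM_apply (u w : Fin ℓ → ℂ) :
    outerCLM ℓ u w = vecMulVec u (star w) := rfl

noncomputable def appCLM (M : Matrix (Fin ℓ) (Fin d) ℂ) (j : Fin n) :
    (Fin n → Fin d → ℂ) →L[ℝ] (Fin ℓ → ℂ) :=
  LinearMap.toContinuousLinearMap
    { toFun := fun x' => M *ᵥ x' j
      map_add' := fun a b => by simp [mulVec_add]
      map_smul' := fun c a => by simp [mulVec_smul] }

@[simp] lemma appCLM_apply (M : Matrix (Fin ℓ) (Fin d) ℂ) (j : Fin n)
    (x' : Fin n → Fin d → ℂ) : appCLM M j x' = M *ᵥ x' j := rfl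

noncomputable def sappCLM (M : Matrix (Fin ℓ) (Fin d) ℂ) (j : Fin n) :
    (Fin n → Fin d → ℂ) →L[ℝ] (Fin ℓ → ℂ) :=
  LinearMap.toContinuousLinearMap
    { toFun := fun x' => star (M *ᵥ x' j)
      map_add' := fun a b => by simp [mulVec_add, star_add]
      map_smul' := fun c a => by simp [mulVec_smul, star_smul] }

@[simp] lemma sappCLM_apply (M : Matrix (Fin ℓ) (Fin d) ℂ) (j : Fin n)
    (x' : Fin n → Fin d → ℂ) : sappCLM M j x' = star (M *ᵥ x' j) := rfl

lemma Gmat_eq (B : Fin n → Fin n → Matrix (Fin ℓ) (Fin d) ℂ)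
    (x' : Fin n → Fin d → ℂ) (i : Fin n) :
    Gmat B x' i = ∑ j, vecMulVec (B i j *ᵥ x' j) (star (B i j *ᵥ x' j)) := by
  unfold Gmat
  refine Finset.sum_congr rfl fun j _ => ?_
  ext a b
  simp only [Matrix.mul_apply, vecMulVec_apply, Matrix.mulVec, dotProduct,
    Matrix.conjTranspose_apply, Pi.star_apply, Finset.sum_mul, Finset.mul_sum,
    star_sum, star_mul', RCLike.star_def]
  refine Finset.sum_congr rfl fun c _ => Finset.sum_congr rfl fun k _ => ?_
  ring

lemma vecMulVec_mulVec' {ℓ : ℕ} (a c w : Fin ℓ → ℂ) :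
    vecMulVec a c *ᵥ w = (c ⬝ᵥ w) • a := by
  ext k
  simp [vecMulVec_apply, Matrix.mulVec, dotProduct, Finset.mul_sum, Finset.sum_mul]
  exact Finset.sum_congr rfl fun l _ => by ring

/-- The derivative of the `j`-th summand of `Gmat`. -/
noncomputable def GD {n d ℓ : ℕ} (B : Fin n → Fin n → Matrix (Fin ℓ) (Fin d) ℂ)
    (x : Fin n → Fin d → ℂ) (i j : Fin n) :
    (Fin n → Fin d → ℂ) →L[ℝ] Matrix (Fin ℓ) (Fin ℓ) ℂ :=
  (outerCLM ℓ).precompR (Fin n → Fin d → ℂ) (B i j *ᵥ x j) (appCLM (B i j) j)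
    + (outerCLM ℓ).precompL (Fin n → Fin d → ℂ) (appCLM (B i j) j) (B i j *ᵥ x j)

lemma GD_apply {n d ℓ : ℕ} (B : Fin n → Fin n → Matrix (Fin ℓ) (Fin d) ℂ)
    (x : Fin n → Fin d → ℂ) (i j : Fin n) (h : Fin n → Fin d → ℂ) :
    GD B x i j h = vecMulVec (B i j *ᵥ x j) (star (B i j *ᵥ h j))
      + vecMulVec (B i j *ᵥ h j) (star (B i j *ᵥ x j)) := rfl


lemma sum_mulVec' {n ℓ : ℕ} (M : Fin n → Matrix (Fin ℓ) (Fin ℓ) ℂ) (w : Fin ℓ → ℂ) :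
    (∑ j, M j) *ᵥ w = ∑ j, M j *ᵥ w := by
  ext k
  simp only [Matrix.mulVec, dotProduct, Matrix.sum_apply, Finset.sum_mul, Finset.sum_apply]
  rw [Finset.sum_comm]

lemma dotProduct_sum' {n ℓ : ℕ} (v : Fin ℓ → ℂ) (w : Fin n → Fin ℓ → ℂ) :
    v ⬝ᵥ (∑ j, w j) = ∑ j, v ⬝ᵥ w j := by
  simp only [dotProduct, Finset.sum_apply, Finset.mul_sum]
  rw [Finset.sum_comm]

lemma middle_eq {ℓ d : ℕ} (Bij : Matrix (Fin ℓ) (Fin d) ℂ) (y : Fin ℓ → ℂ)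
    (xj hj : Fin d → ℂ) :
    star y ⬝ᵥ ((vecMulVec (Bij *ᵥ xj) (star (Bij *ᵥ hj))
        + vecMulVec (Bij *ᵥ hj) (star (Bij *ᵥ xj))) *ᵥ y)
      = (star ((Bijᴴ * vecMulVec y (star y) * Bij) *ᵥ xj) ⬝ᵥ hj)
        + star (star ((Bijᴴ * vecMulVec y (star y) * Bij) *ᵥ xj) ⬝ᵥ hj) := by
  have hr : star ((Bijᴴ * vecMulVec y (star y) * Bij) *ᵥ xj) ⬝ᵥ hj
      = star (star y ⬝ᵥ (Bij *ᵥ xj)) * (star y ⬝ᵥ (Bij *ᵥ hj)) := by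
    rw [← Matrix.mulVec_mulVec, ← Matrix.mulVec_mulVec, vecMulVec_mulVec',
      Matrix.mulVec_smul, star_smul, smul_dotProduct, smul_eq_mul,
      Matrix.star_mulVec, Matrix.conjTranspose_conjTranspose,
      ← Matrix.dotProduct_mulVec]
  rw [hr, Matrix.add_mulVec, dotProduct_add, vecMulVec_mulVec', vecMulVec_mulVec',
    dotProduct_smul, dotProduct_smul, smul_eq_mul, smul_eq_mul,
    star_dotProduct (Bij *ᵥ hj) y, star_dotProduct (Bij *ᵥ xj) y, star_mul', star_star]
  ring

end MratioAux

open MratioAux ContinuousLinearMap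

set_option maxHeartbeats 2000000 in
theorem Mratio_hasFDerivAt {n d ℓ : ℕ}
    (A : Fin n → Matrix (Fin ℓ) (Fin d) ℂ)
    (B : Fin n → Fin n → Matrix (Fin ℓ) (Fin d) ℂ)
    (x : Fin n → Fin d → ℂ) (i : Fin n)
    (hG : (Gmat B x i).PosDef)
    (y : Fin ℓ → ℂ) (hy : y = (Gmat B x i)⁻¹ *ᵥ (A i *ᵥ x i)) :
    ∃ L : (Fin n → Fin d → ℂ) →L[ℝ] ℝ,
      HasFDerivAt (fun x' => Mratio A B x' i) L x ∧
      ∀ h : Fin n → Fin d → ℂ,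
        L h = 2 * (star ((A i)ᴴ *ᵥ y
              - ((B i i)ᴴ * vecMulVec y (star y) * B i i) *ᵥ x i) ⬝ᵥ h i).re
          - 2 * ∑ j ∈ Finset.univ.erase i,
              (star (((B i j)ᴴ * vecMulVec y (star y) * B i j) *ᵥ x j) ⬝ᵥ h j).re := by
  classical
  obtain ⟨u, hu⟩ := hG.isUnit
  -- derivative of `x' ↦ Aᵢ x'ᵢ`
  have hv : HasFDerivAt (fun x' : Fin n → Fin d → ℂ => A i *ᵥ x' i)
      (appCLM (A i) i) x := (appCLM (A i) i).hasFDerivAt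
  -- derivative of each summand of `Gmat`
  have hGj : ∀ j : Fin n, HasFDerivAt
      (fun x' : Fin n → Fin d → ℂ => vecMulVec (B i j *ᵥ x' j) (star (B i j *ᵥ x' j)))
      (GD B x i j) x := by
    intro j
    have hb : HasFDerivAt (fun x' : Fin n → Fin d → ℂ => B i j *ᵥ x' j)
        (appCLM (B i j) j) x := (appCLM (B i j) j).hasFDerivAt
    exact (outerCLM ℓ).hasFDerivAt_of_bilinear hb hb
  -- derivative of `Gmat`
  have hGsum : HasFDerivAt (fun x' => Gmat B x' i) (∑ j, GD B x i j) x := by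
    have hfun : (fun x' : Fin n → Fin d → ℂ => Gmat B x' i)
        = fun x' => ∑ j, vecMulVec (B i j *ᵥ x' j) (star (B i j *ᵥ x' j)) :=
      funext fun x' => Gmat_eq B x' i
    rw [hfun]
    exact HasFDerivAt.fun_sum (fun j _ => hGj j)
  -- derivative of `x' ↦ (Gmat B x' i)⁻¹`
  have hinv : (↑u⁻¹ : Matrix (Fin ℓ) (Fin ℓ) ℂ) = (Gmat B x i)⁻¹ := by
    rw [Matrix.nonsing_inv_eq_ringInverse, ← hu, Ring.inverse_unit]
  have hGinvd : HasFDerivAt (fun x' : Fin n → Fin d → ℂ => (Gmat B x' i)⁻¹)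
      ((-(mulLeftRight ℝ (Matrix (Fin ℓ) (Fin ℓ) ℂ) (Gmat B x i)⁻¹ (Gmat B x i)⁻¹)).comp
        (∑ j, GD B x i j)) x := by
    have h1 : HasFDerivAt (Ring.inverse : Matrix (Fin ℓ) (Fin ℓ) ℂ → _)
        (-(mulLeftRight ℝ (Matrix (Fin ℓ) (Fin ℓ) ℂ) ↑u⁻¹ ↑u⁻¹)) (Gmat B x i) := by
      rw [← hu]; exact hasFDerivAt_ringInverse u
    have hfun : (fun x' : Fin n → Fin d → ℂ => (Gmat B x' i)⁻¹)
        = fun x' => Ring.inverse (Gmat B x' i) :=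
      funext fun _ => Matrix.nonsing_inv_eq_ringInverse _
    rw [hfun, ← hinv]
    exact h1.comp x hGsum
  -- derivative of `x' ↦ (Gmat B x' i)⁻¹ *ᵥ (Aᵢ x'ᵢ)`
  have hw := (mvCLM ℓ).hasFDerivAt_of_bilinear hGinvd hv
  -- derivative of `x' ↦ star (Aᵢ x'ᵢ)`
  have hs : HasFDerivAt (fun x' : Fin n → Fin d → ℂ => star (A i *ᵥ x' i))
      (sappCLM (A i) i) x := (sappCLM (A i) i).hasFDerivAt
  have hdot := (dotCLM ℓ).hasFDerivAt_of_bilinear hs hw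
  have hM := Complex.reCLM.hasFDerivAt.comp x hdot
  refine ⟨_, hM, ?_⟩
  intro h
  change (star (A i *ᵥ x i) ⬝ᵥ ((Gmat B x i)⁻¹ *ᵥ (A i *ᵥ h i)
      + (-((Gmat B x i)⁻¹ * ((∑ j, GD B x i j) h) * (Gmat B x i)⁻¹)) *ᵥ (A i *ᵥ x i))
      + star (A i *ᵥ h i) ⬝ᵥ ((Gmat B x i)⁻¹ *ᵥ (A i *ᵥ x i))).re = _
  simp only [ContinuousLinearMap.coe_comp', Function.comp_apply, ContinuousLinearMap.add_apply,
    MratioAux.dotCLM_apply, MratioAux.mvCLM_apply, MratioAux.outerCLM_apply,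
    MratioAux.appCLM_apply, MratioAux.sappCLM_apply, ContinuousLinearMap.precompL_apply,
    ContinuousLinearMap.neg_apply, ContinuousLinearMap.sum_apply,
    ContinuousLinearMap.mulLeftRight_apply, Complex.reCLM_apply,
    ContinuousLinearMap.precompR, ContinuousLinearMap.compL_apply]
  have hherm : ((Gmat B x i)⁻¹)ᴴ = (Gmat B x i)⁻¹ := hG.1.inv
  have key : ∀ k : Fin ℓ → ℂ,
      star (A i *ᵥ x i) ⬝ᵥ ((Gmat B x i)⁻¹ *ᵥ k) = star y ⬝ᵥ k := by
    intro k
    rw [Matrix.dotProduct_mulVec]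
    congr 1
    rw [hy]
    conv_rhs => rw [Matrix.star_mulVec, hherm]
  have e1 : star y ⬝ᵥ (A i *ᵥ h i) = star ((A i)ᴴ *ᵥ y) ⬝ᵥ h i := by
    rw [Matrix.star_mulVec, Matrix.conjTranspose_conjTranspose, ← Matrix.dotProduct_mulVec]
  have e2 : star (A i *ᵥ h i) ⬝ᵥ y = star (star ((A i)ᴴ *ᵥ y) ⬝ᵥ h i) := by
    rw [star_dotProduct, e1]
  rw [Matrix.neg_mulVec, dotProduct_add, dotProduct_neg,
    ← Matrix.mulVec_mulVec, ← hy, ← Matrix.mulVec_mulVec, key, key, e1, e2,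
    MratioAux.sum_mulVec', MratioAux.dotProduct_sum']
  have hNsum : ∀ j : Fin n, star y ⬝ᵥ (MratioAux.GD B x i j h *ᵥ y)
      = (star (((B i j)ᴴ * vecMulVec y (star y) * B i j) *ᵥ x j) ⬝ᵥ h j)
        + star (star (((B i j)ᴴ * vecMulVec y (star y) * B i j) *ᵥ x j) ⬝ᵥ h j) := by
    intro j
    rw [MratioAux.GD_apply]
    exact MratioAux.middle_eq (B i j) y (x j) (h j)
  rw [Finset.sum_congr rfl fun j _ => hNsum j, star_sub, sub_dotProduct]
  simp only [Complex.add_re, Complex.neg_re, Complex.sub_re, Complex.re_sum,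
    RCLike.star_def, Complex.conj_re]
  have hsplit : ∑ j ∈ Finset.univ.erase i,
        (star (((B i j)ᴴ * vecMulVec y (star y) * B i j) *ᵥ x j) ⬝ᵥ h j).re
      + (star (((B i i)ᴴ * vecMulVec y (star y) * B i i) *ᵥ x i) ⬝ᵥ h i).re
      = ∑ j, (star (((B i j)ᴴ * vecMulVec y (star y) * B i j) *ᵥ x j) ⬝ᵥ h j).re :=
    Finset.sum_erase_add _ _ (Finset.mem_univ i)
  rw [Finset.sum_add_distrib]
  linarith [hsplit]
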